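/- Let A, B be weighted shifts on H(φ) as above and p ≥ 2. Then A* = (BA)^{p−1}B on the span of monomials if and only if conj(a_{n+1}) φₙ = bₙ^p a_{n+1}^{p−1} φ_{n+1} for all n ≥ 0. -/

import Mathlib

/-- The `H(φ)` inner product on coefficient sequences. -/
noncomputable def innerPhi (φ : ℕ → ℝ) (f g : ℕ → ℂ) : ℂ :=
  ∑' k : ℕ, (φ k : ℂ) * f k * (starRingEnd ℂ) (g k)

/-- Weighted backward shift `A zⁿ = aₙ z^{n−1}` (`A1 = 0`). -/
def wA (a : ℕ → ℂ) (f : ℕ → ℂ) : ℕ → ℂ := fun k => a (k + 1) * f (k + 1)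

/-- Weighted forward shift `B zⁿ = bₙ z^{n+1}`. -/
def wB (b : ℕ → ℂ) (f : ℕ → ℂ) : ℕ → ℂ :=
  fun k => if k = 0 then 0 else b (k - 1) * f (k - 1)

/-- Coefficient sequence of the monomial `zⁿ`. -/
def mono (n : ℕ) : ℕ → ℂ := fun k => if k = n then 1 else 0

lemma iter_BA (a b : ℕ → ℂ) (j n : ℕ) :
    (fun f => wB b (wA a f))^[j] (wB b (mono n))
      = fun k => if k = n + 1 then b n * (a (n + 1) * b n) ^ j else 0 := by
  induction j with
  | zero =>
      funext k
      simp only [Function.iterate_zero, id, wB, mono, pow_zero, mul_one]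
      rcases Nat.eq_zero_or_pos k with hk | hk
      · subst hk; simp
      · have : k ≠ 0 := hk.ne'
        simp only [this, if_false]
        by_cases h : k = n + 1
        · subst h; simp
        · have h2 : k - 1 ≠ n := by omega
          simp [h, h2]
  | succ j ih =>
      rw [Function.iterate_succ_apply', ih]
      funext k
      simp only [wB, wA]
      rcases Nat.eq_zero_or_pos k with hk | hk
      · subst hk; simp
      · have hk0 : k ≠ 0 := hk.ne'
        simp only [hk0, if_false]
        by_cases h : k = n + 1
        · subst h
          simp only [Nat.add_sub_cancel]
          simp only [if_true]; rw [pow_succ]; ring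
        · have h2 : k - 1 + 1 ≠ n + 1 := by omega
          simp [h, h2, show k - 1 ≠ n by omega]

lemma inner_indicator (φ : ℕ → ℝ) (c : ℂ) (j m : ℕ) :
    innerPhi φ (fun k => if k = j then c else 0) (mono m)
      = if m = j then (φ j : ℂ) * c else 0 := by
  unfold innerPhi
  rw [tsum_eq_single j]
  · by_cases h : m = j
    · subst h; simp [mono]
    · have : j ≠ m := fun hh => h hh.symm
      simp [mono, this, h]
  · intro k hk; simp [hk]

theorem stmt17 (φ : ℕ → ℝ) (hφ : ∀ n, 0 < φ n) (a b : ℕ → ℂ) (p : ℕ) (hp : 2 ≤ p) :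
    (∀ n m : ℕ,
        innerPhi φ ((fun f => wB b (wA a f))^[p - 1] (wB b (mono n))) (mono m)
          = innerPhi φ (mono n) (wA a (mono m)))
      ↔ ∀ n : ℕ, (starRingEnd ℂ) (a (n + 1)) * (φ n : ℂ)
          = (b n) ^ p * (a (n + 1)) ^ (p - 1) * (φ (n + 1) : ℂ) := by
  have hRHS : ∀ n m : ℕ, innerPhi φ (mono n) (wA a (mono m))
      = if m = n + 1 then (φ n : ℂ) * (starRingEnd ℂ) (a (n + 1)) else 0 := by
    intro n m
    unfold innerPhi
    rw [tsum_eq_single n]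
    · simp only [mono, wA, if_pos rfl, mul_one]
      by_cases h : m = n + 1
      · subst h; simp
      · have : n + 1 ≠ m := fun hh => h hh.symm
        simp [this, h]
    · intro k hk; simp [mono, hk]
  constructor
  · intro H n
    have := H n (n + 1)
    rw [iter_BA, inner_indicator, hRHS] at this
    simp only [if_pos rfl, if_true] at this
    have hpow : b n * (a (n + 1) * b n) ^ (p - 1) = b n ^ p * a (n + 1) ^ (p - 1) := by
      rw [mul_pow]
      have hp1 : p - 1 + 1 = p := by omega
      calc b n * (a (n + 1) ^ (p - 1) * b n ^ (p - 1))
          = b n ^ (p - 1 + 1) * a (n + 1) ^ (p - 1) := by ring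
        _ = b n ^ p * a (n + 1) ^ (p - 1) := by rw [hp1]
    rw [hpow] at this
    linear_combination -this
  · intro H n m
    rw [iter_BA, inner_indicator, hRHS]
    by_cases h : m = n + 1
    · simp only [if_pos h]
      have hpow : b n * (a (n + 1) * b n) ^ (p - 1) = b n ^ p * a (n + 1) ^ (p - 1) := by
        rw [mul_pow]
        have hp1 : p - 1 + 1 = p := by omega
        calc b n * (a (n + 1) ^ (p - 1) * b n ^ (p - 1))
            = b n ^ (p - 1 + 1) * a (n + 1) ^ (p - 1) := by ring
          _ = b n ^ p * a (n + 1) ^ (p - 1) := by rw [hp1]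
      rw [hpow]
      linear_combination -H n
    · simp [h]
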